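/- Let n, l, m be nonnegative integers with max(l, m) ≤ n ≤ l + m. Then the number of pairs (φ, ψ) of maps φ : {0, 1, …, n} → {0, 1, …, l} and ψ : {0, 1, …, n} → {0, 1, …, m}, both surjective and weakly increasing (i ≤ j implies φ(i) ≤ φ(j) and ψ(i) ≤ ψ(j)), such that for each i = 1, …, n either φ(i−1) ≠ φ(i) or ψ(i−1) ≠ ψ(i), equals n! / ((n−l)! · (n−m)! · (l+m−n)!). -/

import Mathlib

namespace JoyceIII

open Finset Function


open Finset Function

variable {n : ℕ}

/-- Number of elements of `A` below `j`. -/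
def cnt (A : Finset (Fin n)) (j : ℕ) : ℕ :=
  (A.filter fun i : Fin n => (i : ℕ) < j).card

lemma cnt_zero (A : Finset (Fin n)) : cnt A 0 = 0 := by simp [cnt]

lemma cnt_le (A : Finset (Fin n)) (j : ℕ) : cnt A j ≤ A.card := card_filter_le _ _

lemma cnt_mono (A : Finset (Fin n)) : Monotone (cnt A) := by
  intro a b hab
  exact card_le_card (monotone_filter_right _ (fun i _ hi => lt_of_lt_of_le hi hab))

lemma cnt_top (A : Finset (Fin n)) {j : ℕ} (hj : n ≤ j) : cnt A j = A.card := by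
  unfold cnt
  rw [filter_true_of_mem]
  intro i _
  exact lt_of_lt_of_le i.isLt hj

lemma cnt_succ_fin (A : Finset (Fin n)) (i : Fin n) :
    cnt A ((i : ℕ) + 1) = cnt A i + (if i ∈ A then 1 else 0) := by
  unfold cnt
  have hsplit : A.filter (fun x : Fin n => (x : ℕ) < (i : ℕ) + 1)
      = A.filter (fun x : Fin n => (x : ℕ) < (i : ℕ)) ∪ A.filter (fun x : Fin n => x = i) := by
    ext x
    simp only [mem_filter, mem_union]
    constructor
    · rintro ⟨hx, hlt⟩
      rcases Nat.lt_succ_iff_lt_or_eq.1 hlt with h | h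
      · exact Or.inl ⟨hx, h⟩
      · exact Or.inr ⟨hx, Fin.ext h⟩
    · rintro (⟨hx, h⟩ | ⟨hx, h⟩)
      · exact ⟨hx, Nat.lt_succ_of_lt h⟩
      · subst h; exact ⟨hx, Nat.lt_succ_self _⟩
  rw [hsplit, card_union_of_disjoint]
  · congr 1
    rw [filter_eq']
    split <;> simp
  · rw [disjoint_left]
    rintro x hx hx'
    simp only [mem_filter] at hx hx'
    rcases hx' with ⟨_, rfl⟩
    exact lt_irrefl _ hx.2

lemma cnt_succ_le (A : Finset (Fin n)) (j : ℕ) : cnt A (j + 1) ≤ cnt A j + 1 := by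
  by_cases h : j < n
  · rw [show j = ((⟨j, h⟩ : Fin n) : ℕ) from rfl, cnt_succ_fin]
    split <;> omega
  · rw [cnt_top A (by omega), cnt_top A (by omega)]
    omega

lemma ivt (g : ℕ → ℕ) (h0 : g 0 = 0) (hstep : ∀ i, g (i + 1) ≤ g i + 1) :
    ∀ N k, k ≤ g N → ∃ j ≤ N, g j = k := by
  intro N
  induction N with
  | zero => intro k hk; exact ⟨0, le_refl 0, by omega⟩
  | succ N ih =>
    intro k hk
    by_cases h : k ≤ g N
    · obtain ⟨j, hj, hjk⟩ := ih k h
      exact ⟨j, by omega, hjk⟩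
    · exact ⟨N + 1, le_refl _, by have := hstep N; omega⟩



open Finset Function

variable {n l : ℕ}

section Phi

variable {φ : Fin (n + 1) → Fin (l + 1)} (hmono : Monotone φ) (hsurj : Surjective φ)
include hmono hsurj

lemma phi_zero : (φ 0 : ℕ) = 0 := by
  obtain ⟨j, hj⟩ := hsurj 0
  have := hmono (Fin.zero_le j)
  rw [hj] at this
  exact Nat.le_zero.1 (Fin.le_def.1 this)

lemma phi_last : (φ (Fin.last n) : ℕ) = l := by
  obtain ⟨j, hj⟩ := hsurj (Fin.last l)
  have := hmono (Fin.le_last j)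
  rw [hj] at this
  have h2 := Fin.le_def.1 this
  have h3 : (φ (Fin.last n) : ℕ) ≤ l := Nat.lt_succ_iff.1 (φ (Fin.last n)).isLt
  rw [Fin.val_last] at h2
  omega

lemma phi_step (i : Fin n) : (φ i.succ : ℕ) ≤ (φ i.castSucc : ℕ) + 1 := by
  by_contra h
  push_neg at h
  have hv : (φ i.castSucc : ℕ) + 1 < l + 1 := by
    have := (φ i.succ).isLt
    omega
  obtain ⟨j, hj⟩ := hsurj ⟨(φ i.castSucc : ℕ) + 1, hv⟩
  have hgt : i.castSucc < j := by
    by_contra hle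
    push_neg at hle
    have := Fin.le_def.1 (hmono hle)
    rw [hj] at this
    simp at this
  have hge : i.succ ≤ j := Fin.castSucc_lt_iff_succ_le.1 hgt
  have := Fin.le_def.1 (hmono hge)
  rw [hj] at this
  simp at this
  omega

end Phi


variable {n l : ℕ}

/-- The set of indices where `φ` jumps. -/
def stepsSet (φ : Fin (n + 1) → Fin (l + 1)) : Finset (Fin n) :=
  Finset.univ.filter fun i => φ i.castSucc ≠ φ i.succ

section Phi2

variable {φ : Fin (n + 1) → Fin (l + 1)} (hmono : Monotone φ) (hsurj : Surjective φ)
include hmono hsurj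

lemma recon : ∀ j : Fin (n + 1), (φ j : ℕ) = cnt (stepsSet φ) (j : ℕ) := by
  intro j
  induction j using Fin.induction with
  | zero => simp only [Fin.val_zero, cnt_zero]; exact phi_zero hmono hsurj
  | succ i ih =>
    have hle : (φ i.castSucc : ℕ) ≤ (φ i.succ : ℕ) :=
      Fin.le_def.1 (hmono (Fin.castSucc_le_succ i))
    have hstep := phi_step hmono hsurj i
    have hmem : i ∈ stepsSet φ ↔ φ i.castSucc ≠ φ i.succ := by
      simp [stepsSet]
    have hcnt : cnt (stepsSet φ) ((i : ℕ) + 1)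
        = cnt (stepsSet φ) (i : ℕ) + (if i ∈ stepsSet φ then 1 else 0) :=
      cnt_succ_fin _ i
    rw [Fin.coe_castSucc] at ih
    rw [Fin.val_succ, hcnt, ← ih]
    by_cases h : φ i.castSucc = φ i.succ
    · rw [if_neg (by rw [hmem]; simpa using h)]
      have := congrArg Fin.val h
      omega
    · rw [if_pos (hmem.2 h)]
      have hne : (φ i.castSucc : ℕ) ≠ (φ i.succ : ℕ) := fun he => h (Fin.ext he)
      omega

lemma card_stepsSet : (stepsSet φ).card = l := by
  have h1 := recon hmono hsurj (Fin.last n)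
  rw [phi_last hmono hsurj] at h1
  rw [Fin.val_last, cnt_top _ (le_refl n)] at h1
  omega

end Phi2

/-- Building a monotone surjective map from a step set. -/
def build (A : Finset (Fin n)) (hA : A.card = l) (j : Fin (n + 1)) : Fin (l + 1) :=
  ⟨cnt A j, by rw [← hA]; exact Nat.lt_succ_of_le (cnt_le A j)⟩

lemma build_mono (A : Finset (Fin n)) (hA : A.card = l) : Monotone (build A hA) := by
  intro a b hab
  exact Fin.le_def.2 (cnt_mono A (Fin.le_def.1 hab))

lemma build_surj (A : Finset (Fin n)) (hA : A.card = l) : Surjective (build A hA) := by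
  intro k
  have hk : (k : ℕ) ≤ cnt A n := by
    rw [cnt_top _ (le_refl n), hA]
    exact Nat.lt_succ_iff.1 k.isLt
  obtain ⟨j, hj, hjk⟩ := ivt (cnt A) (cnt_zero A) (cnt_succ_le A) n (k : ℕ) hk
  exact ⟨⟨j, Nat.lt_succ_of_le hj⟩, Fin.ext hjk⟩

lemma build_steps (A : Finset (Fin n)) (hA : A.card = l) :
    stepsSet (build A hA) = A := by
  ext i
  simp only [stepsSet, mem_filter, mem_univ, true_and]
  have hc : (build A hA i.castSucc : ℕ) = cnt A (i : ℕ) := rfl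
  have hs : (build A hA i.succ : ℕ) = cnt A ((i : ℕ) + 1) := rfl
  constructor
  · intro h
    by_contra hnA
    apply h
    apply Fin.ext
    rw [hc, hs, cnt_succ_fin, if_neg hnA]
    omega
  · intro h hEq
    have := congrArg Fin.val hEq
    rw [hc, hs, cnt_succ_fin, if_pos h] at this
    omega


/-- The counting identity in the proof of Theorem 7.7: for
`max(l, m) ≤ n ≤ l + m`, the number of pairs `(φ, ψ)` of surjective monotone
maps `φ : {0,…,n} → {0,…,l}`, `ψ : {0,…,n} → {0,…,m}` such that for each
`i = 1, …, n` either `φ(i−1) ≠ φ(i)` or `ψ(i−1) ≠ ψ(i)`, equals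
`n! / ((n−l)! (n−m)! (l+m−n)!)`. -/
theorem card_surjective_monotone_pairs (n l m : ℕ)
    (hl : l ≤ n) (hm : m ≤ n) (hnm : n ≤ l + m) :
    (Nat.card {p : (Fin (n + 1) → Fin (l + 1)) × (Fin (n + 1) → Fin (m + 1)) //
        Function.Surjective p.1 ∧ Function.Surjective p.2 ∧
        Monotone p.1 ∧ Monotone p.2 ∧
        ∀ i : Fin n, p.1 i.castSucc ≠ p.1 i.succ ∨ p.2 i.castSucc ≠ p.2 i.succ} : ℚ) =
      (n.factorial : ℚ) /
        (((n - l).factorial : ℚ) * ((n - m).factorial : ℚ) *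
          ((l + m - n).factorial : ℚ)) := by
  classical
  set k := l + m - n with hk
  -- Step 1: biject with pairs of step sets
  set T := {q : Finset (Fin n) × Finset (Fin n) //
      q.1 ∪ q.2 = Finset.univ ∧ q.1.card = l ∧ q.2.card = m} with hT
  have step1 : Nat.card {p : (Fin (n + 1) → Fin (l + 1)) × (Fin (n + 1) → Fin (m + 1)) //
        Function.Surjective p.1 ∧ Function.Surjective p.2 ∧
        Monotone p.1 ∧ Monotone p.2 ∧
        ∀ i : Fin n, p.1 i.castSucc ≠ p.1 i.succ ∨ p.2 i.castSucc ≠ p.2 i.succ}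
      = Nat.card T := by
    apply Nat.card_eq_of_bijective
      (fun p => (⟨(stepsSet p.1.1, stepsSet p.1.2), by
        obtain ⟨hs1, hs2, hm1, hm2, hne⟩ := p.2
        refine ⟨?_, card_stepsSet hm1 hs1, card_stepsSet hm2 hs2⟩
        ext i
        simp only [Finset.mem_union, stepsSet, Finset.mem_filter, Finset.mem_univ, true_and,
          iff_true]
        exact hne i⟩ : T))
    constructor
    · rintro ⟨⟨φ, ψ⟩, hs1, hs2, hm1, hm2, hne⟩ ⟨⟨φ', ψ'⟩, hs1', hs2', hm1', hm2', hne'⟩ h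
      simp only [Subtype.mk.injEq, Prod.mk.injEq] at h
      apply Subtype.ext
      simp only [Prod.mk.injEq]
      constructor
      · funext j
        apply Fin.ext
        rw [recon hm1 hs1 j, recon hm1' hs1' j, h.1]
      · funext j
        apply Fin.ext
        rw [recon hm2 hs2 j, recon hm2' hs2' j, h.2]
    · rintro ⟨⟨A, B⟩, hU, hA, hB⟩
      refine ⟨⟨(build A hA, build B hB), build_surj A hA, build_surj B hB,
        build_mono A hA, build_mono B hB, ?_⟩, ?_⟩
      · intro i
        have hi : i ∈ A ∪ B := by rw [hU]; exact Finset.mem_univ i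
        rcases Finset.mem_union.1 hi with h | h
        · left
          have := build_steps A hA
          rw [← this] at h
          simpa [stepsSet] using h
        · right
          have := build_steps B hB
          rw [← this] at h
          simpa [stepsSet] using h
      · apply Subtype.ext
        simp only [Prod.mk.injEq]
        exact ⟨build_steps A hA, build_steps B hB⟩
  -- Step 2: count T
  have step2 : Nat.card T = n.choose m * m.choose k := by
    have e2 : Nat.card T = Nat.card (Σ b : {B : Finset (Fin n) // B.card = m},
        {C : Finset (Fin n) // C ⊆ b.1 ∧ C.card = k}) := by
      apply Nat.card_eq_of_bijective
        (fun q => (⟨⟨q.1.2, q.2.2.2⟩, ⟨q.1.1 ∩ q.1.2, Finset.inter_subset_right, by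
          obtain ⟨hU, hA, hB⟩ := q.2
          have h1 := Finset.card_union_add_card_inter q.1.1 q.1.2
          rw [hU, hA, hB] at h1
          simp only [Finset.card_univ, Fintype.card_fin] at h1
          omega⟩⟩))
      constructor
      · rintro ⟨⟨A, B⟩, hU, hA, hB⟩ ⟨⟨A', B'⟩, hU', hA', hB'⟩ h
        have hBB : B = B' := congrArg (fun x => x.1.1) h
        have hAB : A ∩ B = A' ∩ B' := congrArg (fun x => x.2.1) h
        subst hBB
        refine Subtype.ext (Prod.ext ?_ rfl)
        ext x
        have hx : x ∈ A ∪ B := by rw [hU]; exact Finset.mem_univ x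
        have hx' : x ∈ A' ∪ B := by rw [hU']; exact Finset.mem_univ x
        by_cases hxB : x ∈ B
        · constructor
          · intro hxA
            have : x ∈ A ∩ B := Finset.mem_inter.2 ⟨hxA, hxB⟩
            rw [hAB] at this
            exact (Finset.mem_inter.1 this).1
          · intro hxA
            have : x ∈ A' ∩ B := Finset.mem_inter.2 ⟨hxA, hxB⟩
            rw [← hAB] at this
            exact (Finset.mem_inter.1 this).1
        · constructor
          · intro _
            rcases Finset.mem_union.1 hx' with h | h
            · exact h
            · exact absurd h hxB
          · intro _
            rcases Finset.mem_union.1 hx with h | h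
            · exact h
            · exact absurd h hxB
      · rintro ⟨⟨B, hB⟩, ⟨C, hCB, hC⟩⟩
        have hdisj : Disjoint Bᶜ C := by
          rw [Finset.disjoint_left]
          intro x hx hxC
          exact (Finset.mem_compl.1 hx) (hCB hxC)
        refine ⟨⟨(Bᶜ ∪ C, B), ?_, ?_, hB⟩, ?_⟩
        · ext x
          simp only [Finset.mem_union, Finset.mem_compl, Finset.mem_univ, iff_true]
          by_cases h : x ∈ B
          · right; exact h
          · left; left; exact h
        · rw [Finset.card_union_of_disjoint hdisj, Finset.card_compl, hB, hC]
          simp only [Fintype.card_fin]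
          omega
        · refine Sigma.subtype_ext rfl ?_
          ext x
          simp only [Finset.mem_inter, Finset.mem_union, Finset.mem_compl]
          constructor
          · rintro ⟨h1 | h1, h2⟩
            · exact absurd h2 h1
            · exact h1
          · intro hxC
            exact ⟨Or.inr hxC, hCB hxC⟩
    rw [e2, Nat.card_eq_fintype_card, Fintype.card_sigma]
    have hfiber : ∀ b : {B : Finset (Fin n) // B.card = m},
        Fintype.card {C : Finset (Fin n) // C ⊆ b.1 ∧ C.card = k} = m.choose k := by
      intro b
      rw [Fintype.card_subtype]
      have : Finset.univ.filter (fun C : Finset (Fin n) => C ⊆ b.1 ∧ C.card = k)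
          = b.1.powersetCard k := by
        ext C
        simp [Finset.mem_powersetCard]
      rw [this, Finset.card_powersetCard, b.2]
    simp only [hfiber]
    rw [Finset.sum_const, Finset.card_univ, Fintype.card_finset_len, Fintype.card_fin,
      smul_eq_mul]
  -- Step 3: arithmetic
  rw [step1, step2]
  have h1 : n.choose m * m.factorial * (n - m).factorial = n.factorial :=
    Nat.choose_mul_factorial_mul_factorial hm
  have hkm : k ≤ m := by omega
  have h2 : m.choose k * k.factorial * (m - k).factorial = m.factorial :=
    Nat.choose_mul_factorial_mul_factorial hkm
  have hmk : m - k = n - l := by omega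
  rw [hmk] at h2
  have hne1 : ((n - l).factorial : ℚ) ≠ 0 := Nat.cast_ne_zero.2 (Nat.factorial_ne_zero _)
  have hne2 : ((n - m).factorial : ℚ) ≠ 0 := Nat.cast_ne_zero.2 (Nat.factorial_ne_zero _)
  have hne3 : ((k).factorial : ℚ) ≠ 0 := Nat.cast_ne_zero.2 (Nat.factorial_ne_zero _)
  field_simp
  have h1' : (n.choose m : ℚ) * m.factorial * (n - m).factorial = n.factorial := by
    exact_mod_cast congrArg (Nat.cast : ℕ → ℚ) h1
  have h2' : (m.choose k : ℚ) * k.factorial * (n - l).factorial = m.factorial := by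
    exact_mod_cast congrArg (Nat.cast : ℕ → ℚ) h2
  push_cast
  linear_combination ((n.choose m : ℚ) * ((n - m).factorial : ℚ)) * h2' + h1'

end JoyceIII
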